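/- arXiv:math/0601337 — 3 statements merged into one kernel-verified Lean document; each statement's English description precedes it below -/
import Mathlib

section
/- Let a ∈ ℤ³ be primitive and let x ∈ ℂ³. The following are equivalent: (i) Im(α(x)·conj(β(x))) > 0 for some oriented basis (α,β) of H(a); (ii) Im(α(x)·conj(β(x))) > 0 for every oriented basis (α,β) of H(a); (iii) there is an oriented basis (α,β) of H(a) with β(x) ≠ 0 and Im(α(x)/β(x)) > 0; (iv) there is an oriented basis (α,β) of H(a) with α(x) ≠ 0 and Im(β(x)/α(x)) < 0. -/
namespace EGG

/-- Integer vectors in `ℤ³`. -/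
abbrev V : Type := Fin 3 → ℤ

/-- gcd of the three coordinates. -/
def gcd3 (v : V) : ℕ := Nat.gcd (Nat.gcd (v 0).natAbs (v 1).natAbs) (v 2).natAbs

/-- A vector of `ℤ³` is primitive if it is nonzero and the gcd of its coordinates is 1. -/
def Primitive (a : V) : Prop := a ≠ 0 ∧ gcd3 a = 1

/-- Cross product of integer vectors. -/
def cross (a b : V) : V :=
  ![a 1 * b 2 - a 2 * b 1, a 2 * b 0 - a 0 * b 2, a 0 * b 1 - a 1 * b 0]

/-- Dot product of integer vectors. -/
def dotZ (α a : V) : ℤ := α 0 * a 0 + α 1 * a 1 + α 2 * a 2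

/-- Dot product of a rational vector with an integer vector. -/
def dotQ (α : Fin 3 → ℚ) (a : V) : ℚ := α 0 * (a 0 : ℚ) + α 1 * (a 1 : ℚ) + α 2 * (a 2 : ℚ)

/-- Dot product of a real vector with an integer vector. -/
def dotR (l : Fin 3 → ℝ) (a : V) : ℝ := l 0 * (a 0 : ℝ) + l 1 * (a 1 : ℝ) + l 2 * (a 2 : ℝ)

/-- The pairing `α(x) = α₁x₁+α₂x₂+α₃x₃` of a rational vector with a complex vector. -/
noncomputable def pairQ (α : Fin 3 → ℚ) (x : Fin 3 → ℂ) : ℂ :=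
  (α 0 : ℂ) * x 0 + (α 1 : ℂ) * x 1 + (α 2 : ℂ) * x 2

/-- The pairing `α(x) = α₁x₁+α₂x₂+α₃x₃` of an integer vector with a complex vector. -/
noncomputable def pairZ (α : V) (x : Fin 3 → ℂ) : ℂ :=
  (α 0 : ℂ) * x 0 + (α 1 : ℂ) * x 1 + (α 2 : ℂ) * x 2

/-- The canonical map `ℤ³ → ℚ³`. -/
def toQ (a : V) : Fin 3 → ℚ := fun i => (a i : ℚ)

/-- Determinant of the 3×3 matrix with rows `α, β, δ`. -/
def det3Q (α β δ : Fin 3 → ℚ) : ℚ := Matrix.det (Matrix.of ![α, β, δ])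

/-- `(α, β)` is an oriented basis of the plane `H(a) = {α : α·a = 0}`. -/
def IsOrientedBasis (a : V) (α β : Fin 3 → ℚ) : Prop :=
  dotQ α a = 0 ∧ dotQ β a = 0 ∧
  LinearIndependent ℚ ![α, β] ∧
  (∀ δ : Fin 3 → ℚ, dotQ δ a = 0 → ∃ p q : ℚ, δ = p • α + q • β) ∧
  (∀ δ : Fin 3 → ℚ, 0 < dotQ δ a → 0 < det3Q α β δ)

/-- The domain `U⁺_a ⊆ ℂ³`. -/
noncomputable def UPlus (a : V) : Set (Fin 3 → ℂ) :=
  {x | ∃ α β : Fin 3 → ℚ, IsOrientedBasis a α β ∧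
    0 < (pairQ α x * (starRingEnd ℂ) (pairQ β x)).im}

/-- `γ` is the direction vector of the wedge `(a,b)`: `γ` is primitive and
`a × b = s • γ` for some integer `s ≥ 1` (the modulus). -/
def IsDirVec (a b γ : V) : Prop :=
  Primitive γ ∧ ∃ s : ℤ, 1 ≤ s ∧ cross a b = s • γ

/-- `C₊₋(a,b) = {δ ∈ ℤ³ : δ·a > 0, δ·b ≤ 0}`. -/
def Cpm (a b : V) : Set V := {δ | 0 < dotZ δ a ∧ dotZ δ b ≤ 0}

/-- `C₋₊(a,b) = {δ ∈ ℤ³ : δ·a ≤ 0, δ·b > 0}`. -/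
def Cmp (a b : V) : Set V := {δ | dotZ δ a ≤ 0 ∧ 0 < dotZ δ b}

/-- The factor `1 - e^{-2πi(δ(x)-w)/γ(x)}` appearing in the numerator of `Γ_{a,b}`. -/
noncomputable def gammaFacP (γ : V) (x : Fin 3 → ℂ) (w : ℂ) (δ : V) : ℂ :=
  1 - Complex.exp (-(2 * (Real.pi : ℂ) * Complex.I) * (pairZ δ x - w) / pairZ γ x)

/-- The factor `1 - e^{2πi(δ(x)-w)/γ(x)}` appearing in the denominator of `Γ_{a,b}`. -/
noncomputable def gammaFacM (γ : V) (x : Fin 3 → ℂ) (w : ℂ) (δ : V) : ℂ :=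
  1 - Complex.exp ((2 * (Real.pi : ℂ) * Complex.I) * (pairZ δ x - w) / pairZ γ x)

/-- The gamma function `Γ_{a,b}(w,x)` of the wedge `(a,b)` with direction vector `γ`:
the products run over the sets `C₊₋(a,b)/ℤγ` and `C₋₊(a,b)/ℤγ`; each factor is evaluated
on the chosen representative `Quotient.out q` of the class `q` (the factors are constant
on classes modulo `ℤγ`). -/
noncomputable def GammaWedge (a b γ : V) (w : ℂ) (x : Fin 3 → ℂ) : ℂ :=
  if a = b then 1 else
    (∏' q : (QuotientAddGroup.mk '' Cpm a b : Set (V ⧸ AddSubgroup.zmultiples γ)),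
      gammaFacP γ x w (Quotient.out (q : V ⧸ AddSubgroup.zmultiples γ))) /
    (∏' q : (QuotientAddGroup.mk '' Cmp a b : Set (V ⧸ AddSubgroup.zmultiples γ)),
      gammaFacM γ x w (Quotient.out (q : V ⧸ AddSubgroup.zmultiples γ)))

/-- The theta function `θ₀(z,τ)`, for `Im τ > 0`. -/
noncomputable def theta0 (z τ : ℂ) : ℂ :=
  ∏' j : ℕ, ((1 - Complex.exp (2 * (Real.pi : ℂ) * Complex.I * (((j : ℂ) + 1) * τ - z))) *
    (1 - Complex.exp (2 * (Real.pi : ℂ) * Complex.I * ((j : ℂ) * τ + z))))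

/-- The elliptic gamma function `Γ(z,τ,σ)`, for `Im τ > 0` and `Im σ > 0`. -/
noncomputable def ellGamma (z τ σ : ℂ) : ℂ :=
  (∏' p : ℕ × ℕ, (1 - Complex.exp (2 * (Real.pi : ℂ) * Complex.I *
      (((p.1 : ℂ) + 1) * τ + ((p.2 : ℂ) + 1) * σ - z)))) /
  (∏' p : ℕ × ℕ, (1 - Complex.exp (2 * (Real.pi : ℂ) * Complex.I *
      ((p.1 : ℂ) * τ + (p.2 : ℂ) * σ + z))))

/-- The elliptic gamma function `Γ̃(z,τ,σ)` in the domain `Im τ < 0 < Im σ`. -/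
noncomputable def ellGammaTilde (z τ σ : ℂ) : ℂ :=
  (∏' p : ℕ × ℕ, (1 - Complex.exp (2 * (Real.pi : ℂ) * Complex.I *
      (z - ((p.1 : ℂ) + 1) * τ + (p.2 : ℂ) * σ)))) /
  (∏' p : ℕ × ℕ, (1 - Complex.exp (2 * (Real.pi : ℂ) * Complex.I *
      (-z - (p.1 : ℂ) * τ + ((p.2 : ℂ) + 1) * σ))))

/-- The polynomial `P₂`. -/
noncomputable def P2 (w x₁ x₂ : ℂ) : ℂ :=
  (w ^ 2 - (x₁ + x₂) * w + (x₁ ^ 2 + x₂ ^ 2 + 3 * x₁ * x₂) / 6) / (x₁ * x₂)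

/-- The Bernoulli polynomial `P₃ = B₃,₃`. -/
noncomputable def P3 (w x₁ x₂ x₃ : ℂ) : ℂ :=
  w ^ 3 / (x₁ * x₂ * x₃) - (3 * (x₁ + x₂ + x₃) / (2 * (x₁ * x₂ * x₃))) * w ^ 2
    + ((x₁ ^ 2 + x₂ ^ 2 + x₃ ^ 2 + 3 * x₁ * x₂ + 3 * x₂ * x₃ + 3 * x₁ * x₃)
        / (2 * (x₁ * x₂ * x₃))) * w
    - (1 / 4) * (x₁ + x₂ + x₃) * (1 / x₁ + 1 / x₂ + 1 / x₃)

/-- The real polynomial `R₃ = B₂,₃`. -/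
noncomputable def R3 (ζ t s : ℝ) : ℝ :=
  ζ ^ 3 / (t * s) - (3 / 2) * (1 / t + 1 / s) * ζ ^ 2
    + (t / (2 * s) + s / (2 * t) + 3 / 2) * ζ - (t + s) / 4

/-- The hermitian weight `h₂(z,τ)` for the theta bundle. -/
noncomputable def h2 (z τ : ℂ) : ℝ :=
  Real.exp (-2 * Real.pi * z.im ^ 2 / τ.im + 2 * Real.pi * (z - τ / 6).im)

/-- The hermitian weight `h₃(z,τ,σ)`. -/
noncomputable def h3 (z τ σ : ℂ) : ℝ :=
  Real.exp (-(2 * Real.pi / 3) * R3 z.im τ.im σ.im)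

/-- The finite product of theta functions `Δ` with parameters `A₁ = α₁(x)`, `A₂ = α₂(x)`,
`A₃ = α₃(x)` and first framing coordinate `m = μ(a)`:
`∏_{j=0}^{m-1} θ₀((w+jA₁)/A₃, A₂/A₃)` for `m ≥ 0` and
`(∏_{j=m}^{-1} θ₀((w+jA₁)/A₃, A₂/A₃))⁻¹` for `m < 0`. -/
noncomputable def DeltaInt (w A₁ A₂ A₃ : ℂ) (m : ℤ) : ℂ :=
  if 0 ≤ m then
    ∏ j ∈ Finset.range m.toNat, theta0 ((w + (j : ℂ) * A₁) / A₃) (A₂ / A₃)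
  else
    (∏ j ∈ Finset.range (-m).toNat, theta0 ((w - ((j : ℂ) + 1) * A₁) / A₃) (A₂ / A₃))⁻¹



private lemma det3Q_comb (p q r s : ℚ) (α β δ : Fin 3 → ℚ) :
    det3Q (p • α + q • β) (r • α + s • β) δ = (p*s - q*r) * det3Q α β δ := by
  simp [det3Q, Matrix.det_fin_three]; ring

private lemma det3Q_smul_left (r : ℚ) (β δ : Fin 3 → ℚ) : det3Q (r • β) β δ = 0 := by
  simp [det3Q, Matrix.det_fin_three]; ring

private lemma det3Q_smul_right (r : ℚ) (α δ : Fin 3 → ℚ) : det3Q α (r • α) δ = 0 := by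
  simp [det3Q, Matrix.det_fin_three]; ring

private lemma pairQ_comb (p q : ℚ) (α β : Fin 3 → ℚ) (x : Fin 3 → ℂ) :
    pairQ (p • α + q • β) x = (p:ℂ) * pairQ α x + (q:ℂ) * pairQ β x := by
  simp [pairQ]; ring

private lemma im_comb (p q r s : ℚ) (A B : ℂ) :
    (((p:ℂ)*A + (q:ℂ)*B) * (starRingEnd ℂ) ((r:ℂ)*A + (s:ℂ)*B)).im
      = ((p*s - q*r : ℚ) : ℝ) * (A * (starRingEnd ℂ) B).im := by
  simp [Complex.mul_im, Complex.add_im, Complex.add_re, Complex.mul_re]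
  ring

private lemma im_div (A B : ℂ) :
    (A / B).im = (A * (starRingEnd ℂ) B).im / Complex.normSq B := by
  simp [Complex.div_im, Complex.mul_im]; ring

private lemma im_swap (A B : ℂ) :
    (B * (starRingEnd ℂ) A).im = -(A * (starRingEnd ℂ) B).im := by
  simp [Complex.mul_im]; ring

private lemma dotQ_self_pos (a : V) (ha : a ≠ 0) : 0 < dotQ (toQ a) a := by
  obtain ⟨i, hi⟩ := Function.ne_iff.mp ha
  have hi0 : a i ≠ 0 := by simpa using hi
  have h0 : (a i : ℚ) ≠ 0 := Int.cast_ne_zero.mpr hi0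
  have hp : 0 < (a i : ℚ) * (a i : ℚ) := mul_self_pos.mpr h0
  fin_cases i <;> simp only [Fin.zero_eta, Fin.mk_one, Fin.reduceFinMk, Fin.isValue] at hp <;>
    · simp only [dotQ, toQ] at *
      nlinarith [mul_self_nonneg ((a 0 : ℚ)), mul_self_nonneg ((a 1 : ℚ)),
        mul_self_nonneg ((a 2 : ℚ))]

private lemma buildBasis (a : V) (ha : a ≠ 0) (α β : Fin 3 → ℚ) (c : ℚ) (hc : 0 < c)
    (h1 : dotQ α a = 0) (h2 : dotQ β a = 0)
    (hdet : ∀ δ, det3Q α β δ = c * dotQ δ a) :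
    IsOrientedBasis a α β := by
  have hli : ∀ s t : ℚ, s • α + t • β = 0 → s = 0 ∧ t = 0 := by
    intro s t hst
    have hd0 : det3Q α β (toQ a) ≠ 0 := by
      rw [hdet]; exact (mul_pos hc (dotQ_self_pos a ha)).ne'
    constructor
    · by_contra hs
      have hα : α = (-(t/s)) • β := by
        funext j
        have hj := congrFun hst j
        simp only [Pi.add_apply, Pi.smul_apply, smul_eq_mul, Pi.zero_apply] at hj ⊢
        field_simp
        linarith
      exact hd0 (by rw [hα, det3Q_smul_left])
    · by_contra ht
      have hβ : β = (-(s/t)) • α := by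
        funext j
        have hj := congrFun hst j
        simp only [Pi.add_apply, Pi.smul_apply, smul_eq_mul, Pi.zero_apply] at hj ⊢
        field_simp
        linarith
      exact hd0 (by rw [hβ, det3Q_smul_right])
  refine ⟨h1, h2, LinearIndependent.pair_iff.mpr hli, ?_, ?_⟩
  · intro δ hδ
    have hdz : (Matrix.of ![α, β, δ]).det = 0 := by
      have h := hdet δ; rw [hδ, mul_zero] at h; exact h
    obtain ⟨v, hv, hvM⟩ := Matrix.exists_vecMul_eq_zero_iff.mpr hdz
    have hcoord : ∀ j, v 0 * α j + v 1 * β j + v 2 * δ j = 0 := by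
      intro j
      have h := congrFun hvM j
      simpa [Matrix.vecMul, dotProduct, Fin.sum_univ_three, add_assoc] using h
    by_cases h2v : v 2 = 0
    · exfalso
      have hz : v 0 • α + v 1 • β = 0 := by
        funext j
        have h := hcoord j
        rw [h2v] at h
        simp only [Pi.add_apply, Pi.smul_apply, smul_eq_mul, Pi.zero_apply]
        linarith
      obtain ⟨hv0, hv1⟩ := hli _ _ hz
      apply hv; funext j; fin_cases j <;> simp [hv0, hv1, h2v]
    · refine ⟨-(v 0)/v 2, -(v 1)/v 2, ?_⟩
      funext j
      have h := hcoord j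
      simp only [Pi.add_apply, Pi.smul_apply, smul_eq_mul]
      field_simp
      linear_combination h
  · intro δ hδ; rw [hdet]; exact mul_pos hc hδ

private lemma exists_oriented (a : V) (ha : a ≠ 0) :
    ∃ α β : Fin 3 → ℚ, IsOrientedBasis a α β := by
  obtain ⟨i, hi⟩ := Function.ne_iff.mp ha
  have hi0 : a i ≠ 0 := by simpa using hi
  have hi' : (a i : ℚ) ≠ 0 := Int.cast_ne_zero.mpr hi0
  fin_cases i
  · rcases hi'.lt_or_gt with hneg | hpos
    · exact ⟨![-(a 2:ℚ), 0, (a 0:ℚ)], ![-(a 1:ℚ), (a 0:ℚ), 0],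
        buildBasis a ha _ _ (-(a 0:ℚ)) (by simpa using hneg)
        (by simp [dotQ]; ring) (by simp [dotQ]; ring)
        (fun δ => by simp [det3Q, dotQ, Matrix.det_fin_three]; ring)⟩
    · exact ⟨![-(a 1:ℚ), (a 0:ℚ), 0], ![-(a 2:ℚ), 0, (a 0:ℚ)],
        buildBasis a ha _ _ ((a 0:ℚ)) hpos
        (by simp [dotQ]; ring) (by simp [dotQ]; ring)
        (fun δ => by simp [det3Q, dotQ, Matrix.det_fin_three]; ring)⟩
  · rcases hi'.lt_or_gt with hneg | hpos
    · exact ⟨![(a 1:ℚ), -(a 0:ℚ), 0], ![0, -(a 2:ℚ), (a 1:ℚ)],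
        buildBasis a ha _ _ (-(a 1:ℚ)) (by simpa using hneg)
        (by simp [dotQ]; ring) (by simp [dotQ]; ring)
        (fun δ => by simp [det3Q, dotQ, Matrix.det_fin_three]; ring)⟩
    · exact ⟨![0, -(a 2:ℚ), (a 1:ℚ)], ![(a 1:ℚ), -(a 0:ℚ), 0],
        buildBasis a ha _ _ ((a 1:ℚ)) hpos
        (by simp [dotQ]; ring) (by simp [dotQ]; ring)
        (fun δ => by simp [det3Q, dotQ, Matrix.det_fin_three]; ring)⟩
  · rcases hi'.lt_or_gt with hneg | hpos
    · exact ⟨![0, (a 2:ℚ), -(a 1:ℚ)], ![(a 2:ℚ), 0, -(a 0:ℚ)],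
        buildBasis a ha _ _ (-(a 2:ℚ)) (by simpa using hneg)
        (by simp [dotQ]; ring) (by simp [dotQ]; ring)
        (fun δ => by simp [det3Q, dotQ, Matrix.det_fin_three]; ring)⟩
    · exact ⟨![(a 2:ℚ), 0, -(a 0:ℚ)], ![0, (a 2:ℚ), -(a 1:ℚ)],
        buildBasis a ha _ _ ((a 2:ℚ)) hpos
        (by simp [dotQ]; ring) (by simp [dotQ]; ring)
        (fun δ => by simp [det3Q, dotQ, Matrix.det_fin_three]; ring)⟩

/-- the four equivalent characterizations of the domain `U⁺_a`. -/
theorem statement0 (a : V) (ha : Primitive a) (x : Fin 3 → ℂ) :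
    ((∃ α β : Fin 3 → ℚ, IsOrientedBasis a α β ∧
        0 < (pairQ α x * (starRingEnd ℂ) (pairQ β x)).im) ↔
      (∀ α β : Fin 3 → ℚ, IsOrientedBasis a α β →
        0 < (pairQ α x * (starRingEnd ℂ) (pairQ β x)).im)) ∧
    ((∃ α β : Fin 3 → ℚ, IsOrientedBasis a α β ∧
        0 < (pairQ α x * (starRingEnd ℂ) (pairQ β x)).im) ↔
      (∃ α β : Fin 3 → ℚ, IsOrientedBasis a α β ∧
        pairQ β x ≠ 0 ∧ 0 < (pairQ α x / pairQ β x).im)) ∧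
    ((∃ α β : Fin 3 → ℚ, IsOrientedBasis a α β ∧
        0 < (pairQ α x * (starRingEnd ℂ) (pairQ β x)).im) ↔
      (∃ α β : Fin 3 → ℚ, IsOrientedBasis a α β ∧
        pairQ α x ≠ 0 ∧ (pairQ β x / pairQ α x).im < 0)) := by
  obtain ⟨ha0, -⟩ := ha
  have key : ∀ α β α' β' : Fin 3 → ℚ, IsOrientedBasis a α β → IsOrientedBasis a α' β' →
      0 < (pairQ α x * (starRingEnd ℂ) (pairQ β x)).im →
      0 < (pairQ α' x * (starRingEnd ℂ) (pairQ β' x)).im := by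
    intro α β α' β' hab hab' him
    obtain ⟨p, q, hα'⟩ := hab.2.2.2.1 α' hab'.1
    obtain ⟨r, s, hβ'⟩ := hab.2.2.2.1 β' hab'.2.1
    have hda : 0 < dotQ (toQ a) a := dotQ_self_pos a ha0
    have hd1 : 0 < det3Q α β (toQ a) := hab.2.2.2.2 _ hda
    have hd2 : 0 < det3Q α' β' (toQ a) := hab'.2.2.2.2 _ hda
    rw [hα', hβ', det3Q_comb] at hd2
    have hps : 0 < p * s - q * r := by nlinarith
    rw [hα', hβ', pairQ_comb, pairQ_comb, im_comb]
    have hps' : (0:ℝ) < ((p*s - q*r : ℚ) : ℝ) := by exact_mod_cast hps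
    exact mul_pos hps' him
  obtain ⟨α₀, β₀, hb₀⟩ := exists_oriented a ha0
  refine ⟨⟨?_, ?_⟩, ⟨?_, ?_⟩, ⟨?_, ?_⟩⟩
  · rintro ⟨α, β, hab, him⟩ α' β' hab'
    exact key α β α' β' hab hab' him
  · intro h
    exact ⟨α₀, β₀, hb₀, h _ _ hb₀⟩
  · rintro ⟨α, β, hab, him⟩
    have hB : pairQ β x ≠ 0 := by
      intro h; rw [h] at him; simp at him
    refine ⟨α, β, hab, hB, ?_⟩
    rw [im_div]
    exact div_pos him (Complex.normSq_pos.mpr hB)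
  · rintro ⟨α, β, hab, hB, him⟩
    refine ⟨α, β, hab, ?_⟩
    have hn : 0 < Complex.normSq (pairQ β x) := Complex.normSq_pos.mpr hB
    have h := im_div (pairQ α x) (pairQ β x)
    have h' : (pairQ α x * (starRingEnd ℂ) (pairQ β x)).im
        = (pairQ α x / pairQ β x).im * Complex.normSq (pairQ β x) := by
      rw [h]; field_simp
    rw [h']
    exact mul_pos him hn
  · rintro ⟨α, β, hab, him⟩
    have hA : pairQ α x ≠ 0 := by
      intro h; rw [h] at him; simp at him
    refine ⟨α, β, hab, hA, ?_⟩
    rw [im_div, im_swap]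
    exact div_neg_of_neg_of_pos (neg_neg_of_pos him) (Complex.normSq_pos.mpr hA)
  · rintro ⟨α, β, hab, hA, him⟩
    refine ⟨α, β, hab, ?_⟩
    have hn : 0 < Complex.normSq (pairQ α x) := Complex.normSq_pos.mpr hA
    have h := im_div (pairQ β x) (pairQ α x)
    rw [im_swap] at h
    have h' : (pairQ α x * (starRingEnd ℂ) (pairQ β x)).im
        = -((pairQ β x / pairQ α x).im * Complex.normSq (pairQ α x)) := by
      rw [h]; field_simp
    rw [h']
    nlinarith

end EGG
end

section
/- Let a, b ∈ ℤ³ be primitive and ℚ-linearly independent. Then there exist g ∈ SL(3,ℤ) and integers r, s with s ≥ 1, 0 ≤ r < s and gcd(r,s) = 1 such that g·a = e₁ and g·b = r·e₁ + s·e₂. Moreover the pair (r,s) with these properties is unique (it does not depend on the choice of g), and s = mod(a,b). -/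
namespace EGG

/-- `(g, r, s)` puts the wedge `(a,b)` in normal form: `g·a = e₁`, `g·b = r·e₁ + s·e₂`,
with `s ≥ 1`, `0 ≤ r < s` and `gcd(r,s) = 1`. -/
def NormalForm (a b : V) (g : Matrix.SpecialLinearGroup (Fin 3) ℤ) (r s : ℤ) : Prop :=
  1 ≤ s ∧ 0 ≤ r ∧ r < s ∧ Int.gcd r s = 1 ∧
  (g : Matrix (Fin 3) (Fin 3) ℤ).mulVec a = ![1, 0, 0] ∧
  (g : Matrix (Fin 3) (Fin 3) ℤ).mulVec b = r • ![1, 0, 0] + s • ![0, 1, 0]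


abbrev SL3 := Matrix.SpecialLinearGroup (Fin 3) ℤ

lemma mulVec3 (M : Matrix (Fin 3) (Fin 3) ℤ) (v : V) :
    M.mulVec v = ![M 0 0 * v 0 + M 0 1 * v 1 + M 0 2 * v 2,
                   M 1 0 * v 0 + M 1 1 * v 1 + M 1 2 * v 2,
                   M 2 0 * v 0 + M 2 1 * v 1 + M 2 2 * v 2] := by
  funext i
  fin_cases i <;> simp [Matrix.mulVec, dotProduct, Fin.sum_univ_three]

lemma gcd3_eq (v : V) : gcd3 v = Int.gcd ((Int.gcd (v 0) (v 1) : ℤ)) (v 2) := by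
  simp [gcd3, Int.gcd]

lemma gcd3_dvd (v : V) (i : Fin 3) : (gcd3 v : ℤ) ∣ v i := by
  rw [gcd3_eq]
  fin_cases i
  · exact dvd_trans (Int.gcd_dvd_left _ _) (Int.gcd_dvd_left _ _)
  · exact dvd_trans (Int.gcd_dvd_left _ _) (Int.gcd_dvd_right _ _)
  · exact Int.gcd_dvd_right _ _

lemma dvd_gcd3 {c : ℤ} {v : V} (h : ∀ i, c ∣ v i) : c ∣ (gcd3 v : ℤ) := by
  rw [gcd3_eq]
  exact Int.dvd_coe_gcd (Int.dvd_coe_gcd (h 0) (h 1)) (h 2)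

lemma gcd3_dvd_mulVec (M : Matrix (Fin 3) (Fin 3) ℤ) (v : V) (i : Fin 3) :
    (gcd3 v : ℤ) ∣ M.mulVec v i := by
  rw [mulVec3]
  fin_cases i <;> simp <;>
    exact dvd_add (dvd_add ((gcd3_dvd v 0).mul_left _) ((gcd3_dvd v 1).mul_left _))
      ((gcd3_dvd v 2).mul_left _)

lemma inv_mulVec (g : SL3) (v : V) :
    ((g⁻¹ : SL3) : Matrix (Fin 3) (Fin 3) ℤ).mulVec
      ((g : Matrix (Fin 3) (Fin 3) ℤ).mulVec v) = v := by
  rw [Matrix.mulVec_mulVec, ← Matrix.SpecialLinearGroup.coe_mul, inv_mul_cancel,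
    Matrix.SpecialLinearGroup.coe_one, Matrix.one_mulVec]

lemma gcd3_mulVec (g : SL3) (v : V) :
    gcd3 ((g : Matrix (Fin 3) (Fin 3) ℤ).mulVec v) = gcd3 v := by
  have key : ∀ (h : SL3) (w : V), gcd3 w ∣ gcd3 ((h : Matrix (Fin 3) (Fin 3) ℤ).mulVec w) := by
    intro h w
    exact Int.natCast_dvd_natCast.mp (dvd_gcd3 (fun i => gcd3_dvd_mulVec _ w i))
  refine Nat.dvd_antisymm ?_ (key g v)
  have := key g⁻¹ ((g : Matrix (Fin 3) (Fin 3) ℤ).mulVec v)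
  rwa [inv_mulVec] at this

/-- the cofactor matrix of a 3×3 matrix. -/
def cof (M : Matrix (Fin 3) (Fin 3) ℤ) : Matrix (Fin 3) (Fin 3) ℤ :=
  Matrix.of
    ![![M 1 1 * M 2 2 - M 1 2 * M 2 1, M 1 2 * M 2 0 - M 1 0 * M 2 2, M 1 0 * M 2 1 - M 1 1 * M 2 0],
      ![M 2 1 * M 0 2 - M 2 2 * M 0 1, M 2 2 * M 0 0 - M 2 0 * M 0 2, M 2 0 * M 0 1 - M 2 1 * M 0 0],
      ![M 0 1 * M 1 2 - M 0 2 * M 1 1, M 0 2 * M 1 0 - M 0 0 * M 1 2, M 0 0 * M 1 1 - M 0 1 * M 1 0]]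

lemma cross_mulVec (M : Matrix (Fin 3) (Fin 3) ℤ) (v w : V) :
    cross (M.mulVec v) (M.mulVec w) = (cof M).mulVec (cross v w) := by
  funext i
  fin_cases i <;>
    · simp [cross, cof, Matrix.mulVec, dotProduct, Fin.sum_univ_three]
      ring

lemma det_cof (M : Matrix (Fin 3) (Fin 3) ℤ) : (cof M).det = M.det ^ 2 := by
  simp [Matrix.det_fin_three, cof]
  ring

/-- kill the third coordinate, preserving `e₁`. -/
lemma reduce (x y z : ℤ) (h : ¬(y = 0 ∧ z = 0)) :
    ∃ g : SL3, (g : Matrix (Fin 3) (Fin 3) ℤ).mulVec ![x, y, z] = ![x, (Int.gcd y z : ℤ), 0] ∧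
      (g : Matrix (Fin 3) (Fin 3) ℤ).mulVec ![1, 0, 0] = ![1, 0, 0] := by
  set d : ℤ := (Int.gcd y z : ℤ) with hd
  have hd0 : d ≠ 0 := by
    simp only [hd, ne_eq, Int.natCast_eq_zero, Int.gcd_eq_zero_iff]
    tauto
  obtain ⟨y₁, hy₁⟩ : d ∣ y := Int.gcd_dvd_left _ _
  obtain ⟨z₁, hz₁⟩ : d ∣ z := Int.gcd_dvd_right _ _
  set p := Int.gcdA y z
  set q := Int.gcdB y z
  have hbez : d = y * p + z * q := Int.gcd_eq_gcd_ab y z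
  have hbez1 : y₁ * p + z₁ * q = 1 := by
    apply mul_left_cancel₀ hd0
    rw [hy₁, hz₁] at hbez
    linear_combination -hbez
  refine ⟨⟨Matrix.of ![![1, 0, 0], ![0, p, q], ![0, -z₁, y₁]], ?_⟩, ?_, ?_⟩
  · simp [Matrix.det_fin_three]
    linarith [hbez1]
  · rw [mulVec3]
    funext i
    fin_cases i <;> simp [Matrix.vecHead, Matrix.vecTail]
    · rw [hy₁, hz₁]; linear_combination d * hbez1
    · rw [hy₁, hz₁]; ring
  · rw [mulVec3]
    funext i
    fin_cases i <;> simp [Matrix.vecHead, Matrix.vecTail]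

/-- send `(x,y,0)` with `gcd(x,y)=1` to `e₁`. -/
lemma reduce2 (x y : ℤ) (h : Int.gcd x y = 1) :
    ∃ g : SL3, (g : Matrix (Fin 3) (Fin 3) ℤ).mulVec ![x, y, 0] = ![1, 0, 0] := by
  set p := Int.gcdA x y
  set q := Int.gcdB x y
  have hbez : x * p + y * q = 1 := by
    have := Int.gcd_eq_gcd_ab x y
    rw [h] at this
    push_cast at this
    linarith
  refine ⟨⟨Matrix.of ![![p, q, 0], ![-y, x, 0], ![0, 0, 1]], ?_⟩, ?_⟩
  · simp [Matrix.det_fin_three]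
    linarith
  · rw [mulVec3]
    funext i
    fin_cases i <;> simp [Matrix.vecHead, Matrix.vecTail]
    · linarith
    · ring

lemma prim_to_e1 (a : V) (ha : Primitive a) :
    ∃ g : SL3, (g : Matrix (Fin 3) (Fin 3) ℤ).mulVec a = ![1, 0, 0] := by
  have haeq : a = ![a 0, a 1, a 2] := by funext i; fin_cases i <;> rfl
  by_cases hz : a 1 = 0 ∧ a 2 = 0
  · have h1 : Int.gcd (a 0) (a 1) = 1 := by
      have h2 := ha.2
      rw [gcd3_eq, hz.1, hz.2] at h2
      rw [hz.1]
      simpa [Int.natAbs_abs] using h2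
    obtain ⟨g, hg⟩ := reduce2 (a 0) (a 1) h1
    refine ⟨g, ?_⟩
    have h3 : a = ![a 0, a 1, 0] := by
      funext i; fin_cases i <;> simp [hz.2]
    rw [h3, hg]
  · obtain ⟨g₀, hg₀, _⟩ := reduce (a 0) (a 1) (a 2) hz
    have h1 : Int.gcd (a 0) ((Int.gcd (a 1) (a 2) : ℤ)) = 1 := by
      have h2 := ha.2
      rw [gcd3_eq] at h2
      simpa [Int.gcd, Nat.gcd_assoc] using h2
    obtain ⟨g₂, hg₂⟩ := reduce2 (a 0) ((Int.gcd (a 1) (a 2) : ℤ)) h1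
    refine ⟨g₂ * g₀, ?_⟩
    rw [← haeq] at hg₀
    rw [Matrix.SpecialLinearGroup.coe_mul, ← Matrix.mulVec_mulVec, hg₀, hg₂]

lemma exists_normalForm (a b : V) (ha : Primitive a) (hb : Primitive b)
    (hab : LinearIndependent ℚ ![toQ a, toQ b]) :
    ∃ (g : SL3) (r s : ℤ), NormalForm a b g r s := by
  obtain ⟨g₁, hg₁⟩ := prim_to_e1 a ha
  set b' : V := (g₁ : Matrix (Fin 3) (Fin 3) ℤ).mulVec b with hb'
  have hne : ¬(b' 1 = 0 ∧ b' 2 = 0) := by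
    rintro ⟨h1, h2⟩
    have hbeq : b = (b' 0) • a := by
      have h3 : (g₁ : Matrix (Fin 3) (Fin 3) ℤ).mulVec b
          = (g₁ : Matrix (Fin 3) (Fin 3) ℤ).mulVec ((b' 0) • a) := by
        rw [Matrix.mulVec_smul, hg₁, ← hb']
        funext i; fin_cases i <;> simp [h1, h2]
      have h4 : ((g₁⁻¹ : SL3) : Matrix (Fin 3) (Fin 3) ℤ).mulVec
            ((g₁ : Matrix (Fin 3) (Fin 3) ℤ).mulVec b)
          = ((g₁⁻¹ : SL3) : Matrix (Fin 3) (Fin 3) ℤ).mulVec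
            ((g₁ : Matrix (Fin 3) (Fin 3) ℤ).mulVec ((b' 0) • a)) := by rw [h3]
      rwa [inv_mulVec, inv_mulVec] at h4
    have hQ : toQ b = ((b' 0 : ℚ)) • toQ a := by
      funext i
      simp [toQ, hbeq]
    rw [linearIndependent_fin2] at hab
    simp only [Matrix.cons_val_one, Matrix.head_cons, Matrix.cons_val_zero] at hab
    by_cases hc : (b' 0 : ℚ) = 0
    · exact hab.1 (by rw [hQ, hc, zero_smul])
    · exact hab.2 (b' 0 : ℚ)⁻¹ (by rw [hQ, smul_smul, inv_mul_cancel₀ hc, one_smul])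
  have hbeq' : b' = ![b' 0, b' 1, b' 2] := by funext i; fin_cases i <;> rfl
  obtain ⟨g₂, hg₂, hg₂e⟩ := reduce (b' 0) (b' 1) (b' 2) hne
  rw [← hbeq'] at hg₂
  set s : ℤ := (Int.gcd (b' 1) (b' 2) : ℤ) with hs
  have hs1 : 1 ≤ s := by
    have h0 : Int.gcd (b' 1) (b' 2) ≠ 0 := by
      rw [ne_eq, Int.gcd_eq_zero_iff]; tauto
    omega
  set t : ℤ := b' 0 with ht
  set r : ℤ := t % s with hr
  have hr0 : 0 ≤ r := Int.emod_nonneg t (by omega)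
  have hrs : r < s := Int.emod_lt_of_pos t (by omega)
  have hdet : Matrix.det (Matrix.of ![![1, -(t / s), 0], ![0, 1, 0], ![0, 0, 1]]) = 1 := by
    simp [Matrix.det_fin_three]
  set g₃ : SL3 := ⟨Matrix.of ![![1, -(t / s), 0], ![0, 1, 0], ![0, 0, 1]], hdet⟩ with hg₃def
  have hg₃ : (g₃ : Matrix (Fin 3) (Fin 3) ℤ).mulVec ![t, s, 0] = ![r, s, 0] := by
    rw [hg₃def, mulVec3]
    funext i
    fin_cases i <;> simp [Matrix.vecHead, Matrix.vecTail]
    rw [hr, Int.emod_def]; ring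
  have hg₃e : (g₃ : Matrix (Fin 3) (Fin 3) ℤ).mulVec ![1, 0, 0] = ![1, 0, 0] := by
    rw [hg₃def, mulVec3]
    funext i
    fin_cases i <;> simp [Matrix.vecHead, Matrix.vecTail]
  have gveca : ((g₃ * g₂ * g₁ : SL3) : Matrix (Fin 3) (Fin 3) ℤ).mulVec a = ![1, 0, 0] := by
    rw [Matrix.SpecialLinearGroup.coe_mul, Matrix.SpecialLinearGroup.coe_mul,
      ← Matrix.mulVec_mulVec, ← Matrix.mulVec_mulVec, hg₁, hg₂e, hg₃e]
  have gvecb : ((g₃ * g₂ * g₁ : SL3) : Matrix (Fin 3) (Fin 3) ℤ).mulVec b = ![r, s, 0] := by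
    rw [Matrix.SpecialLinearGroup.coe_mul, Matrix.SpecialLinearGroup.coe_mul,
      ← Matrix.mulVec_mulVec, ← Matrix.mulVec_mulVec, ← hb', hg₂, hg₃]
  have hrscoprime : Int.gcd r s = 1 := by
    have h5 := gcd3_mulVec (g₃ * g₂ * g₁) b
    rw [gvecb, hb.2] at h5
    have h6 : gcd3 ![r, s, 0] = Int.gcd r s := by
      rw [gcd3_eq]
      simp [Int.gcd]
    rw [h6] at h5
    exact h5
  refine ⟨g₃ * g₂ * g₁, r, s, hs1, hr0, hrs, hrscoprime, gveca, ?_⟩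
  rw [gvecb]
  funext i
  fin_cases i <;> simp

lemma s_eq_gcd3 (a b : V) (g : SL3) (r s : ℤ) (h : NormalForm a b g r s) :
    s = (gcd3 (cross a b) : ℤ) := by
  obtain ⟨hs, hr0, hrs, hgcd, hga, hgb⟩ := h
  have hgb' : (g : Matrix (Fin 3) (Fin 3) ℤ).mulVec b = ![r, s, 0] := by
    rw [hgb]; funext i; fin_cases i <;> simp
  have hdet : (cof (g : Matrix (Fin 3) (Fin 3) ℤ)).det = 1 := by
    rw [det_cof, g.prop, one_pow]
  have h5 := gcd3_mulVec (⟨cof (g : Matrix (Fin 3) (Fin 3) ℤ), hdet⟩ : SL3) (cross a b)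
  rw [show ((⟨cof (g : Matrix (Fin 3) (Fin 3) ℤ), hdet⟩ : SL3) : Matrix (Fin 3) (Fin 3) ℤ)
      = cof (g : Matrix (Fin 3) (Fin 3) ℤ) from rfl, ← cross_mulVec, hga, hgb'] at h5
  have hc : cross ![1, 0, 0] ![r, s, 0] = ![0, 0, s] := by
    funext i; fin_cases i <;> simp [cross]
  rw [hc] at h5
  have h6 : gcd3 ![(0 : ℤ), 0, s] = s.natAbs := by
    rw [gcd3_eq]; simp [Int.gcd]
  rw [h6] at h5
  rw [← h5, Int.natAbs_of_nonneg (by omega)]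

lemma unique_rs (a b : V) (g g' : SL3) (r s r' s' : ℤ)
    (h : NormalForm a b g r s) (h' : NormalForm a b g' r' s') : r = r' ∧ s = s' := by
  have hss : s = s' := by rw [s_eq_gcd3 a b g r s h, s_eq_gcd3 a b g' r' s' h']
  refine ⟨?_, hss⟩
  obtain ⟨hs1, hr0, hrs, _, hga, hgb⟩ := h
  obtain ⟨hs1', hr0', hrs', _, hga', hgb'⟩ := h'
  set H : Matrix (Fin 3) (Fin 3) ℤ :=
    (g' : Matrix (Fin 3) (Fin 3) ℤ) * ((g⁻¹ : SL3) : Matrix (Fin 3) (Fin 3) ℤ) with hH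
  have hinva : ((g⁻¹ : SL3) : Matrix (Fin 3) (Fin 3) ℤ).mulVec ![1, 0, 0] = a := by
    rw [← hga, inv_mulVec]
  have hinvb : ((g⁻¹ : SL3) : Matrix (Fin 3) (Fin 3) ℤ).mulVec
      (r • ![1, 0, 0] + s • ![0, 1, 0]) = b := by
    rw [← hgb, inv_mulVec]
  have hHb : H.mulVec (r • ![1, 0, 0] + s • ![0, 1, 0])
      = r' • ![1, 0, 0] + s' • ![0, 1, 0] := by
    rw [hH, ← Matrix.mulVec_mulVec, hinvb, hgb']
  have hHa : H.mulVec ![1, 0, 0] = ![1, 0, 0] := by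
    rw [hH, ← Matrix.mulVec_mulVec, hinva, hga']
  rw [Matrix.mulVec_add, Matrix.mulVec_smul, Matrix.mulVec_smul, hHa] at hHb
  have h0 := congrFun hHb 0
  simp [Pi.add_apply, Pi.smul_apply] at h0
  -- h0 : r + s * (H.mulVec ![0,1,0] 0) = r'
  have hdvd : s ∣ r' - r := ⟨H.mulVec ![0, 1, 0] 0, by linarith⟩
  have hmod : r % s = r' % s := Int.modEq_iff_dvd.mpr hdvd
  rw [Int.emod_eq_of_lt hr0 hrs, hss, Int.emod_eq_of_lt hr0' (hss ▸ hrs')] at hmod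
  exact hmod

/-- normal form of a wedge under `SL(3,ℤ)`, uniqueness of `(r,s)`, and
`s = mod(a,b)`. -/
theorem statement2 (a b : V) (ha : Primitive a) (hb : Primitive b)
    (hab : LinearIndependent ℚ ![toQ a, toQ b]) :
    (∃ (g : Matrix.SpecialLinearGroup (Fin 3) ℤ) (r s : ℤ), NormalForm a b g r s) ∧
    (∀ (g g' : Matrix.SpecialLinearGroup (Fin 3) ℤ) (r s r' s' : ℤ),
      NormalForm a b g r s → NormalForm a b g' r' s' → r = r' ∧ s = s') ∧
    (∀ (g : Matrix.SpecialLinearGroup (Fin 3) ℤ) (r s : ℤ),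
      NormalForm a b g r s → s = (gcd3 (cross a b) : ℤ)) := by
  exact ⟨exists_normalForm a b ha hb hab,
    fun g g' r s r' s' h h' => unique_rs a b g g' r s r' s' h h',
    fun g r s h => s_eq_gcd3 a b g r s h⟩

end EGG
end

section
/- Let a, b ∈ ℤ³ be primitive and ℚ-linearly independent, let γ = γ_{a,b}, and let x ∈ U⁺_a ∩ U⁺_b. Then γ(x) ≠ 0, and for every w ∈ ℂ: the family ([δ] ∈ C₊₋(a,b)/ℤγ) ↦ (1 − e^{−2πi(δ(x)−w)/γ(x)}) and the family ([δ] ∈ C₋₊(a,b)/ℤγ) ↦ (1 − e^{2πi(δ(x)−w)/γ(x)}) are both multipliable; each of the two infinite products is a holomorphic function of w on all of ℂ; the first product vanishes at w if and only if w = δ(x) + n·γ(x) for some δ ∈ C₊₋(a,b) and n ∈ ℤ, and the second vanishes at w if and only if w = δ(x) + n·γ(x) for some δ ∈ C₋₊(a,b) and n ∈ ℤ. -/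
namespace EGG

section Helpers
open Complex Filter


lemma multipliable_of_log {ι : Type*} (f : ι → ℂ) (h0 : ∀ i, f i ≠ 0)
    (h : Summable fun i => Complex.log (f i)) : Multipliable f :=
  Complex.multipliable_of_summable_log h

lemma tprod_eq_exp_tsum_log {ι : Type*} (f : ι → ℂ) (h0 : ∀ i, f i ≠ 0)
    (h : Summable fun i => Complex.log (f i)) :
    ∏' i, f i = Complex.exp (∑' i, Complex.log (f i)) := by
  exact (Complex.cexp_tsum_eq_tprod h0 h).symm

lemma local_all {ι : Type*} {K : ι → ℂ} (hK : Summable fun i => ‖K i‖) (z₀ : ℂ) :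
    Multipliable (fun i => 1 - K i * z₀) ∧
    DifferentiableAt ℂ (fun z => ∏' i, (1 - K i * z)) z₀ ∧
    ((∏' i, (1 - K i * z₀)) = 0 ↔ ∃ i, K i * z₀ = 1) := by
  classical
  set R : ℝ := ‖z₀‖ + 1 with hR
  have hR1 : 1 ≤ R := le_add_of_nonneg_left (norm_nonneg _)
  have hRpos : 0 < R := lt_of_lt_of_le one_pos hR1
  have hfin : {i | ¬ ‖K i‖ < 1 / (2 * R)}.Finite := by
    have := hK.tendsto_cofinite_zero
    have h2 : 0 < 1 / (2 * R) := by positivity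
    have hev : ∀ᶠ i in Filter.cofinite, ‖K i‖ < 1 / (2 * R) := by
      have := this.eventually (gt_mem_nhds h2)
      exact this
    rw [Filter.eventually_cofinite] at hev
    exact hev
  set sF : Finset ι := hfin.toFinset with hsF
  set B := Metric.ball z₀ 1 with hB
  have hz₀B : z₀ ∈ B := Metric.mem_ball_self one_pos
  -- small on ball
  have hsmall : ∀ i : ((↑sF : Set ι)ᶜ : Set ι), ∀ z ∈ B, ‖K (i : ι) * z‖ < 1 / 2 := by
    rintro ⟨i, hi⟩ z hz
    have hiK : ‖K i‖ < 1 / (2 * R) := by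
      by_contra hcon
      apply hi
      simp only [Finset.coe_sort_coe, Set.mem_compl_iff, Finset.mem_coe, not_not, hsF,
        Set.Finite.mem_toFinset, Set.mem_setOf_eq] at *
      exact hcon
    have hzn : ‖z‖ < R := by
      calc ‖z‖ ≤ ‖z₀‖ + ‖z - z₀‖ := by
            simpa using norm_add_le (z₀) (z - z₀)
        _ < ‖z₀‖ + 1 := by
            have := Metric.mem_ball.mp hz
            rw [dist_eq_norm] at this
            linarith
    calc ‖K i * z‖ = ‖K i‖ * ‖z‖ := norm_mul _ _
      _ ≤ ‖K i‖ * R := by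
          exact mul_le_mul_of_nonneg_left hzn.le (norm_nonneg _)
      _ < (1 / (2 * R)) * R := by
          apply mul_lt_mul_of_pos_right hiK hRpos
      _ = 1 / 2 := by field_simp
  have hne : ∀ i : ((↑sF : Set ι)ᶜ : Set ι), ∀ z ∈ B, (1 : ℂ) - K (i : ι) * z ≠ 0 := by
    intro i z hz
    have := hsmall i z hz
    intro hcon
    rw [sub_eq_zero] at hcon
    rw [← hcon] at this
    norm_num at this
  -- the complement index type
  set T : Set ι := (↑sF : Set ι)ᶜ with hT
  have hTfin : (↑sF : Set ι).Finite := sF.finite_toSet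
  -- derivative data for the log series on the complement
  have hderiv : ∀ (i : T) (z : ℂ), z ∈ B →
      HasDerivAt (fun z => Complex.log (1 - K (i : ι) * z)) (-(K (i : ι)) / (1 - K (i : ι) * z)) z := by
    intro i z hz
    have h1 : HasDerivAt (fun z : ℂ => 1 - K (i : ι) * z) (-(K (i : ι))) z := by
      simpa using ((hasDerivAt_id z).const_mul (K (i : ι))).const_sub 1
    have hs : (1 - K (i : ι) * z) ∈ Complex.slitPlane := by
      rw [Complex.mem_slitPlane_iff]
      left
      have hre : (K (i : ι) * z).re ≤ ‖K (i : ι) * z‖ := Complex.re_le_norm _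
      have := hsmall i z hz
      simp only [Complex.sub_re, Complex.one_re]
      linarith
    simpa using h1.clog hs
  have hbound : ∀ (i : T) (z : ℂ), z ∈ B →
      ‖-(K (i : ι)) / (1 - K (i : ι) * z)‖ ≤ 2 * ‖K (i : ι)‖ := by
    intro i z hz
    have hlow : (1:ℝ)/2 ≤ ‖1 - K (i : ι) * z‖ := by
      have h1 := norm_sub_norm_le (1 : ℂ) (K (i : ι) * z)
      have h2 := hsmall i z hz
      simp only [norm_one] at h1
      linarith
    rw [norm_div, norm_neg]
    rw [div_le_iff₀ (by linarith)]
    calc ‖K (i : ι)‖ = ‖K (i : ι)‖ * 1 := (mul_one _).symm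
      _ ≤ (2 * ‖K (i : ι)‖) * ‖1 - K (i : ι) * z‖ := by
          nlinarith [norm_nonneg (K (i : ι))]
  have hu : Summable fun i : T => 2 * ‖K (i : ι)‖ := ((hK.subtype T)).mul_left 2
  have hg0 : Summable fun i : T => Complex.log (1 - K (i : ι) * z₀) := by
    apply Summable.of_norm_bounded (g := fun i : T => (3/2 * R) * ‖K (i : ι)‖)
      (((hK.subtype T)).mul_left _)
    intro i
    have hsm := hsmall i z₀ hz₀B
    have : ‖Complex.log (1 + (-(K (i : ι) * z₀)))‖ ≤ 3/2 * ‖-(K (i : ι) * z₀)‖ :=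
      Complex.norm_log_one_add_half_le_self (by rw [norm_neg]; linarith)
    have hz0R : ‖z₀‖ ≤ R := by rw [hR]; linarith
    calc ‖Complex.log (1 - K (i : ι) * z₀)‖
        = ‖Complex.log (1 + (-(K (i : ι) * z₀)))‖ := by rw [sub_eq_add_neg]
      _ ≤ 3/2 * ‖-(K (i : ι) * z₀)‖ := this
      _ = 3/2 * (‖K (i : ι)‖ * ‖z₀‖) := by rw [norm_neg, norm_mul]
      _ ≤ 3/2 * (‖K (i : ι)‖ * R) := by
          apply mul_le_mul_of_nonneg_left _ (by norm_num)
          exact mul_le_mul_of_nonneg_left hz0R (norm_nonneg _)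
      _ = (3/2 * R) * ‖K (i : ι)‖ := by ring
  have hBopen : IsOpen B := Metric.isOpen_ball
  have hBconn : IsPreconnected B := (convex_ball z₀ 1).isPreconnected
  have hsum : ∀ z ∈ B, Summable fun i : T => Complex.log (1 - K (i : ι) * z) := by
    intro z hz
    exact summable_of_summable_hasDerivAt_of_isPreconnected
      (u := fun i : T => 2 * ‖K (i : ι)‖)
      (g := fun (i : T) z => Complex.log (1 - K (i : ι) * z))
      (g' := fun (i : T) z => -(K (i : ι)) / (1 - K (i : ι) * z))
      hu hBopen hBconn hderiv hbound hz₀B hg0 hz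
  -- multipliability on the complement, and on everything
  have hmulT : ∀ z ∈ B, Multipliable fun i : T => 1 - K (i : ι) * z := by
    intro z hz
    exact multipliable_of_log _ (fun i => hne i z hz) (hsum z hz)
  have hHP : ∀ z ∈ B, HasProd (fun i => 1 - K i * z)
      ((∏ i ∈ sF, (1 - K i * z)) * ∏' i : T, (1 - K (i : ι) * z)) := by
    intro z hz
    have h1 : HasProd ((fun i => 1 - K i * z) ∘ ((↑) : (↑sF : Set ι) → ι))
        (∏ i ∈ sF, (1 - K i * z)) := sF.hasProd _
    exact h1.mul_compl (hmulT z hz).hasProd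
  have hmulB : ∀ z ∈ B, Multipliable fun i => 1 - K i * z := by
    intro z hz
    exact ⟨_, hHP z hz⟩
  -- the product splits
  have heq : ∀ z ∈ B, (∏' i, (1 - K i * z)) =
      (∏ i ∈ sF, (1 - K i * z)) *
        Complex.exp (∑' i : T, Complex.log (1 - K (i : ι) * z)) := by
    intro z hz
    rw [(hHP z hz).tprod_eq]
    congr 1
    exact tprod_eq_exp_tsum_log _ (fun i => hne i z hz) (hsum z hz)
  refine ⟨hmulB z₀ hz₀B, ?_, ?_⟩
  · -- differentiability
    have hdh : DifferentiableAt ℂ (fun z => ∑' i : T, Complex.log (1 - K (i : ι) * z)) z₀ := by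
      exact (hasDerivAt_tsum_of_isPreconnected
        (u := fun i : T => 2 * ‖K (i : ι)‖)
        (g := fun (i : T) z => Complex.log (1 - K (i : ι) * z))
        (g' := fun (i : T) z => -(K (i : ι)) / (1 - K (i : ι) * z))
        hu hBopen hBconn hderiv hbound hz₀B hg0 hz₀B).differentiableAt
    have hG : DifferentiableAt ℂ (fun z => (∏ i ∈ sF, (1 - K i * z)) *
        Complex.exp (∑' i : T, Complex.log (1 - K (i : ι) * z))) z₀ := by
      apply DifferentiableAt.mul
      · apply DifferentiableAt.fun_finsetProd
        intro i _
        exact (differentiableAt_const _).sub ((differentiableAt_const _).mul differentiableAt_id)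
      · exact hdh.cexp
    apply hG.congr_of_eventuallyEq
    filter_upwards [hBopen.mem_nhds hz₀B] with z hz
    exact heq z hz
  · -- zero characterization
    rw [heq z₀ hz₀B]
    rw [mul_eq_zero]
    constructor
    · rintro (hP | hE)
      · rw [Finset.prod_eq_zero_iff] at hP
        obtain ⟨i, _, hi⟩ := hP
        exact ⟨i, by rw [sub_eq_zero] at hi; exact hi.symm⟩
      · exact absurd hE (Complex.exp_ne_zero _)
    · rintro ⟨i, hi⟩
      left
      have hiz : (1 : ℂ) - K i * z₀ = 0 := by rw [hi]; ring
      have hisF : i ∈ sF := by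
        by_contra hc
        exact hne ⟨i, by simpa [hT] using hc⟩ z₀ hz₀B hiz
      exact Finset.prod_eq_zero hisF hiz

lemma prod_one_sub_lemma {ι : Type*} {K : ι → ℂ} (hK : Summable fun i => ‖K i‖) :
    (∀ z : ℂ, Multipliable fun i => 1 - K i * z) ∧
    Differentiable ℂ (fun z => ∏' i, (1 - K i * z)) ∧
    ∀ z : ℂ, (∏' i, (1 - K i * z)) = 0 ↔ ∃ i, K i * z = 1 :=
  ⟨fun z => (local_all hK z).1, fun z => (local_all hK z).2.1, fun z => (local_all hK z).2.2⟩

-- cross product component values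
lemma cross_apply0 (a b : V) : cross a b 0 = a 1 * b 2 - a 2 * b 1 := rfl
lemma cross_apply1 (a b : V) : cross a b 1 = a 2 * b 0 - a 0 * b 2 := rfl
lemma cross_apply2 (a b : V) : cross a b 2 = a 0 * b 1 - a 1 * b 0 := rfl

/-- cofactor identity, componentwise. -/
lemma cofactor (a b c δ : V) (i : Fin 3) :
    dotZ (cross a b) c * δ i =
      dotZ δ a * (cross b c) i + dotZ δ b * (cross c a) i + dotZ δ c * (cross a b) i := by
  fin_cases i
  · show dotZ (cross a b) c * δ 0 = dotZ δ a * (cross b c) 0 + dotZ δ b * (cross c a) 0 +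
      dotZ δ c * (cross a b) 0
    simp only [dotZ, cross_apply0, cross_apply1, cross_apply2]; ring
  · show dotZ (cross a b) c * δ 1 = dotZ δ a * (cross b c) 1 + dotZ δ b * (cross c a) 1 +
      dotZ δ c * (cross a b) 1
    simp only [dotZ, cross_apply0, cross_apply1, cross_apply2]; ring
  · show dotZ (cross a b) c * δ 2 = dotZ δ a * (cross b c) 2 + dotZ δ b * (cross c a) 2 +
      dotZ δ c * (cross a b) 2
    simp only [dotZ, cross_apply0, cross_apply1, cross_apply2]; ring

/-- cofactor identity, paired with `x`. -/
lemma cofactor_pair (a b c δ : V) (x : Fin 3 → ℂ) :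
    (dotZ (cross a b) c : ℂ) * pairZ δ x =
      (dotZ δ a : ℂ) * pairZ (cross b c) x + (dotZ δ b : ℂ) * pairZ (cross c a) x +
        (dotZ δ c : ℂ) * pairZ (cross a b) x := by
  simp only [dotZ, pairZ, cross_apply0, cross_apply1, cross_apply2]
  push_cast
  ring

lemma dot_cross_left (a b : V) : dotZ (cross a b) a = 0 := by
  simp only [dotZ, cross_apply0, cross_apply1, cross_apply2]; ring

lemma dot_cross_right (a b : V) : dotZ (cross a b) b = 0 := by
  simp only [dotZ, cross_apply0, cross_apply1, cross_apply2]; ring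

lemma lagrange (a b : V) :
    dotZ (cross a b) (cross a b) = dotZ a a * dotZ b b - dotZ a b * dotZ a b := by
  simp only [dotZ, cross_apply0, cross_apply1, cross_apply2]; ring

lemma dotZ_comm (a b : V) : dotZ a b = dotZ b a := by simp only [dotZ]; ring

lemma dotZ_self_pos {v : V} (hv : v ≠ 0) : 0 < dotZ v v := by
  have h : v 0 ≠ 0 ∨ v 1 ≠ 0 ∨ v 2 ≠ 0 := by
    by_contra hc
    push_neg at hc
    apply hv
    funext i
    fin_cases i <;> simp [hc.1, hc.2.1, hc.2.2]
  simp only [dotZ]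
  rcases h with h | h | h
  · nlinarith [sq_nonneg (v 0), sq_nonneg (v 1), sq_nonneg (v 2), sq_pos_of_ne_zero h]
  · nlinarith [sq_nonneg (v 0), sq_nonneg (v 1), sq_nonneg (v 2), sq_pos_of_ne_zero h]
  · nlinarith [sq_nonneg (v 0), sq_nonneg (v 1), sq_nonneg (v 2), sq_pos_of_ne_zero h]

/-- from primitivity: if `d` divides `c * γ i` for all `i`, then `d ∣ c`. -/
lemma primitive_dvd {γ : V} (hγ : gcd3 γ = 1) {d c : ℤ} (h : ∀ i, d ∣ c * γ i) : d ∣ c := by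
  have h01 : (Int.gcd (c * γ 0) (c * γ 1) : ℤ) = c.natAbs * Int.gcd (γ 0) (γ 1) := by
    rw [Int.gcd_mul_left]
    push_cast
    ring
  have hd01 : d ∣ (Int.gcd (c * γ 0) (c * γ 1) : ℤ) := Int.dvd_coe_gcd (h 0) (h 1)
  have hd2 : d ∣ c * γ 2 := h 2
  have hd01' : d ∣ (c.natAbs : ℤ) * (Int.gcd (γ 0) (γ 1) : ℤ) := by
    rw [← h01]; exact hd01
  have hcabs : d ∣ c * (Int.gcd (γ 0) (γ 1) : ℤ) := by
    rcases Int.natAbs_eq c with hc | hc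
    · rwa [← hc] at hd01'
    · have := hd01'.neg_right
      rw [← neg_mul] at this
      rwa [← hc] at this
  -- now d ∣ gcd (c * g01) (c * γ 2) = c * gcd3 = c
  have hfin : d ∣ (Int.gcd (c * (Int.gcd (γ 0) (γ 1) : ℤ)) (c * γ 2) : ℤ) :=
    Int.dvd_coe_gcd hcabs hd2
  have : (Int.gcd (c * (Int.gcd (γ 0) (γ 1) : ℤ)) (c * γ 2) : ℤ)
      = c.natAbs * gcd3 γ := by
    rw [Int.gcd_mul_left]
    have : Int.gcd (Int.gcd (γ 0) (γ 1) : ℤ) (γ 2) = gcd3 γ := by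
      simp [Int.gcd, gcd3, Int.natAbs_natCast]
    rw [this]
    push_cast
    ring
  rw [this, hγ] at hfin
  simp only [Nat.cast_one, mul_one] at hfin
  exact Int.dvd_natAbs.mp hfin


lemma eq_smul_of_dot_eq_zero {a b γ : V} (hγp : Primitive γ) {s : ℤ} (hs : 1 ≤ s)
    (hsγ : cross a b = s • γ) {η : V} (h1 : dotZ η a = 0) (h2 : dotZ η b = 0) :
    ∃ k : ℤ, η = k • γ := by
  have hcomp : ∀ i, dotZ γ γ * η i = dotZ η γ * γ i := by
    intro i
    have hco := cofactor a b (cross a b) η i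
    rw [h1, h2] at hco
    simp only [zero_mul, zero_add] at hco
    rw [hsγ] at hco
    have e1 : dotZ (s • γ) (s • γ) = s * s * dotZ γ γ := by
      simp only [dotZ, Pi.smul_apply, smul_eq_mul]; ring
    have e2 : dotZ η (s • γ) = s * dotZ η γ := by
      simp only [dotZ, Pi.smul_apply, smul_eq_mul]; ring
    rw [e1, e2] at hco
    have hs0 : (s : ℤ) ≠ 0 := by omega
    have : s * s * (dotZ γ γ * η i) = s * s * (dotZ η γ * γ i) := by
      have : (s • γ) i = s * γ i := by simp [Pi.smul_apply, smul_eq_mul]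
      rw [this] at hco
      linear_combination hco
    exact mul_left_cancel₀ (by positivity) this
  have hdvd : dotZ γ γ ∣ dotZ η γ := by
    apply primitive_dvd hγp.2
    intro i
    exact ⟨η i, (hcomp i).symm⟩
  obtain ⟨k, hk⟩ := hdvd
  refine ⟨k, ?_⟩
  have hγγ : dotZ γ γ ≠ 0 := (dotZ_self_pos hγp.1).ne'
  funext i
  have := hcomp i
  rw [hk] at this
  have : dotZ γ γ * η i = dotZ γ γ * (k * γ i) := by linear_combination this
  have := mul_left_cancel₀ hγγ this
  simpa [Pi.smul_apply, smul_eq_mul] using this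

lemma im_bilinear (p q r t : ℝ) (Z1 Z2 : ℂ) :
    (((p : ℂ) * Z1 + (q : ℂ) * Z2) * (starRingEnd ℂ) ((r : ℂ) * Z1 + (t : ℂ) * Z2)).im
      = (p * t - q * r) * (Z1 * (starRingEnd ℂ) Z2).im := by
  simp only [map_add, map_mul, Complex.conj_ofReal, Complex.mul_im, Complex.mul_re,
    Complex.add_re, Complex.add_im, Complex.ofReal_re, Complex.ofReal_im,
    Complex.conj_re, Complex.conj_im]
  ring

lemma det3Q_combo (α β : Fin 3 → ℚ) (p q r t : ℚ) (w1 w2 δ : Fin 3 → ℚ)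
    (h1 : w1 = p • α + q • β) (h2 : w2 = r • α + t • β) :
    det3Q w1 w2 δ = (p * t - q * r) * det3Q α β δ := by
  subst h1 h2
  simp only [det3Q, Matrix.det_fin_three, Matrix.of_apply, Matrix.cons_val', Matrix.cons_val_zero,
    Matrix.cons_val_one, Matrix.head_cons, Matrix.empty_val', Matrix.cons_val_fin_one,
    Matrix.head_fin_const, Matrix.cons_val_two, Matrix.tail_cons, Pi.add_apply, Pi.smul_apply,
    smul_eq_mul]
  ring

lemma pairQ_combo (α β : Fin 3 → ℚ) (p q : ℚ) (v : Fin 3 → ℚ) (h : v = p • α + q • β)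
    (x : Fin 3 → ℂ) :
    pairQ v x = (p : ℂ) * pairQ α x + (q : ℂ) * pairQ β x := by
  subst h
  simp only [pairQ, Pi.add_apply, Pi.smul_apply, smul_eq_mul]
  push_cast
  ring

lemma dotQ_toQ (v a : V) : dotQ (toQ v) a = (dotZ v a : ℚ) := by
  simp only [dotQ, toQ, dotZ]; push_cast; ring

lemma pairQ_toQ (v : V) (x : Fin 3 → ℂ) : pairQ (toQ v) x = pairZ v x := by
  simp only [pairQ, pairZ, toQ]
  norm_cast

lemma uplus_pos (a : V) (ha : a ≠ 0) (v w : V)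
    (hv : dotZ v a = 0) (hw : dotZ w a = 0)
    (hdet : 0 < det3Q (toQ v) (toQ w) (toQ a))
    {x : Fin 3 → ℂ} (hx : x ∈ UPlus a) :
    0 < (pairZ v x * (starRingEnd ℂ) (pairZ w x)).im := by
  obtain ⟨α, β, ⟨hα, hβ, hli, hspan, hpos⟩, him⟩ := hx
  obtain ⟨p, q, hv'⟩ := hspan (toQ v) (by rw [dotQ_toQ, hv]; simp)
  obtain ⟨r, t, hw'⟩ := hspan (toQ w) (by rw [dotQ_toQ, hw]; simp)
  have hda : 0 < det3Q α β (toQ a) := by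
    apply hpos (toQ a)
    rw [dotQ_toQ]
    exact_mod_cast dotZ_self_pos ha
  have hD : det3Q (toQ v) (toQ w) (toQ a) = (p * t - q * r) * det3Q α β (toQ a) :=
    det3Q_combo α β p q r t _ _ _ hv' hw'
  have hpt : 0 < p * t - q * r := by
    rw [hD] at hdet
    by_contra hc
    push_neg at hc
    nlinarith
  rw [← pairQ_toQ v x, ← pairQ_toQ w x, pairQ_combo α β p q _ hv' x,
    pairQ_combo α β r t _ hw' x]
  have hcast : ∀ u : ℚ, (u : ℂ) = ((u : ℝ) : ℂ) := by intro u; push_cast; ring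
  rw [hcast p, hcast q, hcast r, hcast t, im_bilinear]
  have hpt' : (0 : ℝ) < (p : ℝ) * t - q * r := by exact_mod_cast hpt
  exact mul_pos hpt' him


lemma dotZ_smul_left (k : ℤ) (v w : V) : dotZ (k • v) w = k * dotZ v w := by
  simp only [dotZ, Pi.smul_apply, smul_eq_mul]; ring

lemma dotZ_sub_left (u v w : V) : dotZ (u - v) w = dotZ u w - dotZ v w := by
  simp only [dotZ, Pi.sub_apply]; ring

lemma dotZ_add_smul (δ : V) (k : ℤ) (γ a : V) :
    dotZ (δ + k • γ) a = dotZ δ a + k * dotZ γ a := by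
  simp only [dotZ, Pi.add_apply, Pi.smul_apply, smul_eq_mul]; ring

lemma pairZ_smul_left (k : ℤ) (v : V) (x : Fin 3 → ℂ) :
    pairZ (k • v) x = (k : ℂ) * pairZ v x := by
  simp only [pairZ, Pi.smul_apply, smul_eq_mul]; push_cast; ring

lemma pairZ_add_smul (δ : V) (k : ℤ) (γ : V) (x : Fin 3 → ℂ) :
    pairZ (δ + k • γ) x = pairZ δ x + (k : ℂ) * pairZ γ x := by
  simp only [pairZ, Pi.add_apply, Pi.smul_apply, smul_eq_mul]; push_cast; ring

lemma im_div_eq (Z W : ℂ) :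
    (Z / W).im = (Z * (starRingEnd ℂ) W).im / Complex.normSq W := by
  simp only [Complex.div_im, Complex.mul_im, Complex.conj_re, Complex.conj_im,
    Complex.normSq_apply]
  ring

lemma im_conj_swap (Z W : ℂ) :
    (Z * (starRingEnd ℂ) W).im = -((W * (starRingEnd ℂ) Z).im) := by
  simp only [Complex.mul_im, Complex.conj_re, Complex.conj_im]; ring

lemma det3Q_toQ (u v w : V) :
    det3Q (toQ u) (toQ v) (toQ w) = ((dotZ (cross u v) w : ℤ) : ℚ) := by
  simp only [det3Q, Matrix.det_fin_three, Matrix.of_apply, Matrix.cons_val', Matrix.cons_val_zero,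
    Matrix.cons_val_one, Matrix.head_cons, Matrix.empty_val', Matrix.cons_val_fin_one,
    Matrix.head_fin_const, Matrix.cons_val_two, Matrix.tail_cons, toQ, dotZ,
    cross_apply0, cross_apply1, cross_apply2]
  push_cast
  ring

lemma int_mul_im (m : ℤ) (z : ℂ) : ((m : ℂ) * z).im = (m : ℝ) * z.im := by
  simp [Complex.mul_im]

lemma re_neg_twopiI_mul (u : ℂ) :
    (-(2 * (Real.pi : ℂ) * Complex.I) * u).re = 2 * Real.pi * u.im := by
  simp [Complex.mul_re, Complex.mul_im, Complex.I_re, Complex.I_im, Complex.ofReal_re,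
    Complex.ofReal_im]

lemma re_twopiI_mul (u : ℂ) :
    ((2 * (Real.pi : ℂ) * Complex.I) * u).re = -(2 * Real.pi * u.im) := by
  simp [Complex.mul_re, Complex.mul_im, Complex.I_re, Complex.I_im, Complex.ofReal_re,
    Complex.ofReal_im]

/-- representatives of classes -/
lemma rep_exists {γ : V} (q : V ⧸ AddSubgroup.zmultiples γ) (δ : V)
    (hq : QuotientAddGroup.mk δ = q) : ∃ k : ℤ, Quotient.out q = δ + k • γ := by
  subst hq
  have hout : (QuotientAddGroup.mk (Quotient.out (QuotientAddGroup.mk δ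
      : V ⧸ AddSubgroup.zmultiples γ)) : V ⧸ AddSubgroup.zmultiples γ)
      = QuotientAddGroup.mk δ := QuotientAddGroup.out_eq' _
  have hmem := (QuotientAddGroup.eq (s := AddSubgroup.zmultiples γ)).mp hout
  obtain ⟨k, hk⟩ := AddSubgroup.mem_zmultiples_iff.mp hmem
  refine ⟨-k, ?_⟩
  have : -(k • γ) = Quotient.out (QuotientAddGroup.mk δ : V ⧸ AddSubgroup.zmultiples γ) - δ := by
    rw [hk]; abel
  rw [neg_smul, this]
  abel

lemma out_dot_inj {a b γ : V} (hγp : Primitive γ) {s : ℤ} (hs : 1 ≤ s)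
    (hsγ : cross a b = s • γ) {q q' : V ⧸ AddSubgroup.zmultiples γ}
    (h1 : dotZ (Quotient.out q) a = dotZ (Quotient.out q') a)
    (h2 : dotZ (Quotient.out q) b = dotZ (Quotient.out q') b) : q = q' := by
  obtain ⟨k, hk⟩ := eq_smul_of_dot_eq_zero hγp hs hsγ
    (η := Quotient.out q - Quotient.out q')
    (by rw [dotZ_sub_left]; omega) (by rw [dotZ_sub_left]; omega)
  have hmk : (QuotientAddGroup.mk (Quotient.out q) : V ⧸ AddSubgroup.zmultiples γ)
      = QuotientAddGroup.mk (Quotient.out q') := by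
    rw [QuotientAddGroup.eq]
    refine AddSubgroup.mem_zmultiples_iff.mpr ⟨-k, ?_⟩
    rw [neg_smul, ← hk]
    abel
  rwa [QuotientAddGroup.out_eq', QuotientAddGroup.out_eq'] at hmk

end Helpers

/-- convergence, holomorphy in `w`, and zero sets of the two infinite
products (over `C₊₋(a,b)/ℤγ` and `C₋₊(a,b)/ℤγ`) defining `Γ_{a,b}`. -/
theorem statement3 (a b γ : V) (ha : Primitive a) (hb : Primitive b)
    (hab : LinearIndependent ℚ ![toQ a, toQ b]) (hγ : IsDirVec a b γ)
    (x : Fin 3 → ℂ) (hx : x ∈ UPlus a ∩ UPlus b) :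
    pairZ γ x ≠ 0 ∧
    (∀ w : ℂ,
      Multipliable
        (fun q : (QuotientAddGroup.mk '' Cpm a b : Set (V ⧸ AddSubgroup.zmultiples γ)) =>
          gammaFacP γ x w (Quotient.out (q : V ⧸ AddSubgroup.zmultiples γ))) ∧
      Multipliable
        (fun q : (QuotientAddGroup.mk '' Cmp a b : Set (V ⧸ AddSubgroup.zmultiples γ)) =>
          gammaFacM γ x w (Quotient.out (q : V ⧸ AddSubgroup.zmultiples γ)))) ∧
    Differentiable ℂ (fun w : ℂ =>
      ∏' q : (QuotientAddGroup.mk '' Cpm a b : Set (V ⧸ AddSubgroup.zmultiples γ)),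
        gammaFacP γ x w (Quotient.out (q : V ⧸ AddSubgroup.zmultiples γ))) ∧
    Differentiable ℂ (fun w : ℂ =>
      ∏' q : (QuotientAddGroup.mk '' Cmp a b : Set (V ⧸ AddSubgroup.zmultiples γ)),
        gammaFacM γ x w (Quotient.out (q : V ⧸ AddSubgroup.zmultiples γ))) ∧
    (∀ w : ℂ,
      ((∏' q : (QuotientAddGroup.mk '' Cpm a b : Set (V ⧸ AddSubgroup.zmultiples γ)),
          gammaFacP γ x w (Quotient.out (q : V ⧸ AddSubgroup.zmultiples γ))) = 0 ↔
        ∃ δ ∈ Cpm a b, ∃ n : ℤ, w = pairZ δ x + (n : ℂ) * pairZ γ x)) ∧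
    (∀ w : ℂ,
      ((∏' q : (QuotientAddGroup.mk '' Cmp a b : Set (V ⧸ AddSubgroup.zmultiples γ)),
          gammaFacM γ x w (Quotient.out (q : V ⧸ AddSubgroup.zmultiples γ))) = 0 ↔
        ∃ δ ∈ Cmp a b, ∃ n : ℤ, w = pairZ δ x + (n : ℂ) * pairZ γ x)) := by
  obtain ⟨hxa, hxb⟩ := hx
  obtain ⟨hγp, s, hs, hsγ⟩ := hγ
  have ha0 : a ≠ 0 := ha.1
  have hb0 : b ≠ 0 := hb.1
  have hγ0 : γ ≠ 0 := hγp.1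
  have hs0 : s ≠ 0 := by omega
  have hγa : dotZ γ a = 0 := by
    have h := dot_cross_left a b
    rw [hsγ, dotZ_smul_left] at h
    exact (mul_eq_zero.mp h).resolve_left hs0
  have hγb : dotZ γ b = 0 := by
    have h := dot_cross_right a b
    rw [hsγ, dotZ_smul_left] at h
    exact (mul_eq_zero.mp h).resolve_left hs0
  have hdet_a : 0 < det3Q (toQ (cross γ a)) (toQ γ) (toQ a) := by
    rw [det3Q_toQ]
    have hid : dotZ (cross (cross γ a) γ) a = dotZ (cross γ a) (cross γ a) := by
      simp only [dotZ, cross_apply0, cross_apply1, cross_apply2]; ring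
    have hpos : 0 < dotZ (cross (cross γ a) γ) a := by
      rw [hid, lagrange, hγa]
      nlinarith [dotZ_self_pos hγ0, dotZ_self_pos ha0]
    exact_mod_cast hpos
  have hdet_b : 0 < det3Q (toQ γ) (toQ (cross b γ)) (toQ b) := by
    rw [det3Q_toQ]
    have hid : dotZ (cross γ (cross b γ)) b = dotZ (cross b γ) (cross b γ) := by
      simp only [dotZ, cross_apply0, cross_apply1, cross_apply2]; ring
    have hbγ : dotZ b γ = 0 := by rw [dotZ_comm]; exact hγb
    have hpos : 0 < dotZ (cross γ (cross b γ)) b := by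
      rw [hid, lagrange, hbγ]
      nlinarith [dotZ_self_pos hγ0, dotZ_self_pos hb0]
    exact_mod_cast hpos
  have him_a : 0 < (pairZ (cross γ a) x * (starRingEnd ℂ) (pairZ γ x)).im :=
    uplus_pos a ha0 (cross γ a) γ (dot_cross_right γ a) hγa hdet_a hxa
  have him_b : 0 < (pairZ γ x * (starRingEnd ℂ) (pairZ (cross b γ) x)).im :=
    uplus_pos b hb0 γ (cross b γ) hγb (dot_cross_left b γ) hdet_b hxb
  have hGz : pairZ γ x ≠ 0 := by
    intro h
    rw [h] at him_a
    simp at him_a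
  have hnormSq : 0 < Complex.normSq (pairZ γ x) := Complex.normSq_pos.mpr hGz
  set Iτ := (pairZ (cross b γ) x / pairZ γ x).im with hIτdef
  set Iσ := (pairZ (cross γ a) x / pairZ γ x).im with hIσdef
  have hIσpos : 0 < Iσ := by
    rw [hIσdef, im_div_eq]
    exact div_pos him_a hnormSq
  have hIτneg : Iτ < 0 := by
    rw [hIτdef, im_div_eq, im_conj_swap]
    exact div_neg_of_neg_of_pos (by linarith) hnormSq
  have hDpos : 0 < s * dotZ γ γ := mul_pos (by omega) (dotZ_self_pos hγ0)
  have hDR : (0:ℝ) < ((s * dotZ γ γ : ℤ) : ℝ) := by exact_mod_cast hDpos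
  have hkey : ∀ δ : V, ((pairZ δ x) / pairZ γ x).im
      = ((dotZ δ a : ℝ) * Iτ + (dotZ δ b : ℝ) * Iσ) / ((s * dotZ γ γ : ℤ) : ℝ) := by
    intro δ
    have hc := cofactor_pair a b γ δ x
    rw [show dotZ (cross a b) γ = s * dotZ γ γ by rw [hsγ, dotZ_smul_left]] at hc
    rw [show pairZ (cross a b) x = (s:ℂ) * pairZ γ x by rw [hsγ, pairZ_smul_left]] at hc
    have hD0 : ((s * dotZ γ γ : ℤ) : ℂ) ≠ 0 := by exact_mod_cast hDpos.ne'
    have hc' : ((s * dotZ γ γ : ℤ) : ℂ) * (pairZ δ x / pairZ γ x)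
        = (dotZ δ a : ℂ) * (pairZ (cross b γ) x / pairZ γ x)
          + (dotZ δ b : ℂ) * (pairZ (cross γ a) x / pairZ γ x)
          + ((dotZ δ γ * s : ℤ) : ℂ) := by
      field_simp
      push_cast at hc ⊢
      linear_combination hc
    have him := congrArg Complex.im hc'
    simp only [Complex.add_im, int_mul_im, Complex.intCast_im, add_zero] at him
    rw [← hIτdef, ← hIσdef] at him
    rw [eq_div_iff hDR.ne']
    linarith [him]
  refine ⟨hGz, ?_⟩
  -- ===================== side P data =====================
  have hrepP : ∀ q : (QuotientAddGroup.mk '' Cpm a b : Set (V ⧸ AddSubgroup.zmultiples γ)),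
      ∃ δ ∈ Cpm a b, ∃ k : ℤ,
        Quotient.out (q : V ⧸ AddSubgroup.zmultiples γ) = δ + k • γ := by
    rintro ⟨q, δ, hδ, hq⟩
    exact ⟨δ, hδ, rep_exists q δ hq⟩
  have hconeP : ∀ q : (QuotientAddGroup.mk '' Cpm a b : Set (V ⧸ AddSubgroup.zmultiples γ)),
      1 ≤ dotZ (Quotient.out (q : V ⧸ AddSubgroup.zmultiples γ)) a ∧
        dotZ (Quotient.out (q : V ⧸ AddSubgroup.zmultiples γ)) b ≤ 0 := by
    intro q
    obtain ⟨δ, hδ, k, hk⟩ := hrepP q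
    obtain ⟨hδ1, hδ2⟩ := hδ
    rw [hk, dotZ_add_smul, dotZ_add_smul, hγa, hγb]
    omega
  set KP : (QuotientAddGroup.mk '' Cpm a b : Set (V ⧸ AddSubgroup.zmultiples γ)) → ℂ :=
    fun q => Complex.exp (-(2 * (Real.pi : ℂ) * Complex.I) *
      pairZ (Quotient.out (q : V ⧸ AddSubgroup.zmultiples γ)) x / pairZ γ x) with hKPdef
  have hfacP : ∀ (w : ℂ)
      (q : (QuotientAddGroup.mk '' Cpm a b : Set (V ⧸ AddSubgroup.zmultiples γ))), gammaFacP γ x w (Quotient.out (q : V ⧸ AddSubgroup.zmultiples γ))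
      = 1 - KP q * Complex.exp ((2 * (Real.pi : ℂ) * Complex.I) / pairZ γ x * w) := by
    intro w q
    simp only [hKPdef, gammaFacP]
    rw [← Complex.exp_add]
    congr 2
    field_simp
    ring
  have hnormP : ∀ q : (QuotientAddGroup.mk '' Cpm a b : Set (V ⧸ AddSubgroup.zmultiples γ)),
      ‖KP q‖ = Real.exp (2 * Real.pi *
      ((pairZ (Quotient.out (q : V ⧸ AddSubgroup.zmultiples γ)) x / pairZ γ x).im)) := by
    intro q
    simp only [hKPdef]
    rw [Complex.norm_exp, mul_div_assoc]
    rw [re_neg_twopiI_mul]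
  -- ===================== side M data =====================
  have hrepM : ∀ q : (QuotientAddGroup.mk '' Cmp a b : Set (V ⧸ AddSubgroup.zmultiples γ)),
      ∃ δ ∈ Cmp a b, ∃ k : ℤ,
        Quotient.out (q : V ⧸ AddSubgroup.zmultiples γ) = δ + k • γ := by
    rintro ⟨q, δ, hδ, hq⟩
    exact ⟨δ, hδ, rep_exists q δ hq⟩
  have hconeM : ∀ q : (QuotientAddGroup.mk '' Cmp a b : Set (V ⧸ AddSubgroup.zmultiples γ)),
      dotZ (Quotient.out (q : V ⧸ AddSubgroup.zmultiples γ)) a ≤ 0 ∧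
        1 ≤ dotZ (Quotient.out (q : V ⧸ AddSubgroup.zmultiples γ)) b := by
    intro q
    obtain ⟨δ, hδ, k, hk⟩ := hrepM q
    obtain ⟨hδ1, hδ2⟩ := hδ
    rw [hk, dotZ_add_smul, dotZ_add_smul, hγa, hγb]
    omega
  set KM : (QuotientAddGroup.mk '' Cmp a b : Set (V ⧸ AddSubgroup.zmultiples γ)) → ℂ :=
    fun q => Complex.exp ((2 * (Real.pi : ℂ) * Complex.I) *
      pairZ (Quotient.out (q : V ⧸ AddSubgroup.zmultiples γ)) x / pairZ γ x) with hKMdef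
  have hfacM : ∀ (w : ℂ)
      (q : (QuotientAddGroup.mk '' Cmp a b : Set (V ⧸ AddSubgroup.zmultiples γ))), gammaFacM γ x w (Quotient.out (q : V ⧸ AddSubgroup.zmultiples γ))
      = 1 - KM q * Complex.exp (-(2 * (Real.pi : ℂ) * Complex.I) / pairZ γ x * w) := by
    intro w q
    simp only [hKMdef, gammaFacM]
    rw [← Complex.exp_add]
    congr 2
    field_simp
    ring
  have hnormM : ∀ q : (QuotientAddGroup.mk '' Cmp a b : Set (V ⧸ AddSubgroup.zmultiples γ)),
      ‖KM q‖ = Real.exp (-(2 * Real.pi *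
      ((pairZ (Quotient.out (q : V ⧸ AddSubgroup.zmultiples γ)) x / pairZ γ x).im))) := by
    intro q
    simp only [hKMdef]
    rw [Complex.norm_exp, mul_div_assoc]
    rw [re_twopiI_mul]
  -- ===================== geometric bounds =====================
  set DD : ℝ := ((s * dotZ γ γ : ℤ) : ℝ) with hDDdef
  set r1 : ℝ := Real.exp (2 * Real.pi * Iτ / DD) with hr1def
  set r2 : ℝ := Real.exp (-(2 * Real.pi * Iσ / DD)) with hr2def
  have hr1pos : 0 < r1 := Real.exp_pos _
  have hr2pos : 0 < r2 := Real.exp_pos _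
  have hτD : 2 * Real.pi * Iτ / DD < 0 :=
    div_neg_of_neg_of_pos (by nlinarith [Real.pi_pos]) hDR
  have hσD : 0 < 2 * Real.pi * Iσ / DD := div_pos (by nlinarith [Real.pi_pos]) hDR
  have hr1lt : r1 < 1 := by rw [hr1def, Real.exp_lt_one_iff]; exact hτD
  have hr2lt : r2 < 1 := by rw [hr2def, Real.exp_lt_one_iff]; linarith
  have hgeom : Summable (fun p : ℕ × ℕ => r1 ^ p.1 * r2 ^ p.2) :=
    Summable.mul_of_nonneg (summable_geometric_of_lt_one hr1pos.le hr1lt)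
      (summable_geometric_of_lt_one hr2pos.le hr2lt)
      (fun i => pow_nonneg hr1pos.le i) (fun j => pow_nonneg hr2pos.le j)
  -- ===================== summability of KP =====================
  set eP : (QuotientAddGroup.mk '' Cpm a b : Set (V ⧸ AddSubgroup.zmultiples γ)) → ℕ × ℕ :=
    fun q => ((dotZ (Quotient.out (q : V ⧸ AddSubgroup.zmultiples γ)) a - 1).toNat,
      (-(dotZ (Quotient.out (q : V ⧸ AddSubgroup.zmultiples γ)) b)).toNat) with hePdef
  have hePinj : Function.Injective eP := by
    intro q q' h
    have h1 := congrArg Prod.fst h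
    have h2 := congrArg Prod.snd h
    simp only [hePdef] at h1 h2
    have hc := hconeP q
    have hc' := hconeP q'
    exact Subtype.ext (out_dot_inj hγp hs hsγ (by omega) (by omega))
  have hKPsum : Summable (fun q => ‖KP q‖) := by
    apply Summable.of_nonneg_of_le (fun q => norm_nonneg _) _ (hgeom.comp_injective hePinj)
    intro q
    rw [hnormP q, hkey]
    obtain ⟨hm, hn⟩ := hconeP q
    simp only [Function.comp_apply, hePdef]
    set m := dotZ (Quotient.out (q : V ⧸ AddSubgroup.zmultiples γ)) a with hmdef
    set n := dotZ (Quotient.out (q : V ⧸ AddSubgroup.zmultiples γ)) b with hndef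
    have e1 : r1 ^ (m - 1).toNat = Real.exp (((m - 1).toNat : ℝ) * (2 * Real.pi * Iτ / DD)) := by
      rw [hr1def, ← Real.exp_nat_mul]
    have e2 : r2 ^ (-n).toNat
        = Real.exp (((-n).toNat : ℝ) * (-(2 * Real.pi * Iσ / DD))) := by
      rw [hr2def, ← Real.exp_nat_mul]
    rw [e1, e2, ← Real.exp_add, Real.exp_le_exp]
    have hm' : ((m - 1).toNat : ℝ) = (m : ℝ) - 1 := by
      have : ((m - 1).toNat : ℤ) = m - 1 := Int.toNat_of_nonneg (by omega)
      exact_mod_cast congrArg (Int.cast : ℤ → ℝ) this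
    have hn' : ((-n).toNat : ℝ) = -(n : ℝ) := by
      have : ((-n).toNat : ℤ) = -n := Int.toNat_of_nonneg (by omega)
      exact_mod_cast congrArg (Int.cast : ℤ → ℝ) this
    rw [hm', hn']
    have hexp : 2 * Real.pi * (((m : ℝ) * Iτ + (n : ℝ) * Iσ) / DD)
        = (m : ℝ) * (2 * Real.pi * Iτ / DD) + (n : ℝ) * (2 * Real.pi * Iσ / DD) := by
      field_simp
    rw [hexp]
    have expand : ((m : ℝ) - 1) * (2 * Real.pi * Iτ / DD) + -(n : ℝ) * (-(2 * Real.pi * Iσ / DD))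
        = (m : ℝ) * (2 * Real.pi * Iτ / DD) + (n : ℝ) * (2 * Real.pi * Iσ / DD)
          - 2 * Real.pi * Iτ / DD := by ring
    rw [expand]
    linarith
  -- ===================== summability of KM =====================
  set eM : (QuotientAddGroup.mk '' Cmp a b : Set (V ⧸ AddSubgroup.zmultiples γ)) → ℕ × ℕ :=
    fun q => ((-(dotZ (Quotient.out (q : V ⧸ AddSubgroup.zmultiples γ)) a)).toNat,
      ((dotZ (Quotient.out (q : V ⧸ AddSubgroup.zmultiples γ)) b) - 1).toNat) with heMdef
  have heMinj : Function.Injective eM := by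
    intro q q' h
    have h1 := congrArg Prod.fst h
    have h2 := congrArg Prod.snd h
    simp only [heMdef] at h1 h2
    have hc := hconeM q
    have hc' := hconeM q'
    exact Subtype.ext (out_dot_inj hγp hs hsγ (by omega) (by omega))
  have hKMsum : Summable (fun q => ‖KM q‖) := by
    apply Summable.of_nonneg_of_le (fun q => norm_nonneg _) _ (hgeom.comp_injective heMinj)
    intro q
    rw [hnormM q, hkey]
    obtain ⟨hm, hn⟩ := hconeM q
    simp only [Function.comp_apply, heMdef]
    set m := dotZ (Quotient.out (q : V ⧸ AddSubgroup.zmultiples γ)) a with hmdef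
    set n := dotZ (Quotient.out (q : V ⧸ AddSubgroup.zmultiples γ)) b with hndef
    have e1 : r1 ^ (-m).toNat = Real.exp (((-m).toNat : ℝ) * (2 * Real.pi * Iτ / DD)) := by
      rw [hr1def, ← Real.exp_nat_mul]
    have e2 : r2 ^ (n - 1).toNat
        = Real.exp (((n - 1).toNat : ℝ) * (-(2 * Real.pi * Iσ / DD))) := by
      rw [hr2def, ← Real.exp_nat_mul]
    rw [e1, e2, ← Real.exp_add, Real.exp_le_exp]
    have hm' : ((-m).toNat : ℝ) = -(m : ℝ) := by
      have : ((-m).toNat : ℤ) = -m := Int.toNat_of_nonneg (by omega)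
      exact_mod_cast congrArg (Int.cast : ℤ → ℝ) this
    have hn' : ((n - 1).toNat : ℝ) = (n : ℝ) - 1 := by
      have : ((n - 1).toNat : ℤ) = n - 1 := Int.toNat_of_nonneg (by omega)
      exact_mod_cast congrArg (Int.cast : ℤ → ℝ) this
    rw [hm', hn']
    have hexp : -(2 * Real.pi * (((m : ℝ) * Iτ + (n : ℝ) * Iσ) / DD))
        = -(m : ℝ) * (2 * Real.pi * Iτ / DD) + (n : ℝ) * (-(2 * Real.pi * Iσ / DD)) := by
      field_simp
      ring
    rw [hexp]
    have expand : -(m : ℝ) * (2 * Real.pi * Iτ / DD) + ((n : ℝ) - 1) * (-(2 * Real.pi * Iσ / DD))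
        = -(m : ℝ) * (2 * Real.pi * Iτ / DD) + (n : ℝ) * (-(2 * Real.pi * Iσ / DD))
          + 2 * Real.pi * Iσ / DD := by ring
    rw [expand]
    linarith
  obtain ⟨hPmul, hPdiff, hPzero⟩ := prod_one_sub_lemma hKPsum
  obtain ⟨hMmul, hMdiff, hMzero⟩ := prod_one_sub_lemma hKMsum
  refine ⟨?_, ?_, ?_, ?_, ?_⟩
  · -- multipliability
    intro w
    constructor
    · exact (hPmul (Complex.exp ((2 * (Real.pi : ℂ) * Complex.I) / pairZ γ x * w))).congr
        (fun q => (hfacP w q).symm)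
    · exact (hMmul (Complex.exp (-(2 * (Real.pi : ℂ) * Complex.I) / pairZ γ x * w))).congr
        (fun q => (hfacM w q).symm)
  · -- differentiability P
    have hfun : (fun w => ∏' q : (QuotientAddGroup.mk '' Cpm a b :
          Set (V ⧸ AddSubgroup.zmultiples γ)),
        gammaFacP γ x w (Quotient.out (q : V ⧸ AddSubgroup.zmultiples γ)))
        = (fun z => ∏' q : (QuotientAddGroup.mk '' Cpm a b :
            Set (V ⧸ AddSubgroup.zmultiples γ)), (1 - KP q * z)) ∘
          (fun w => Complex.exp ((2 * (Real.pi : ℂ) * Complex.I) / pairZ γ x * w)) := by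
      funext w
      exact tprod_congr (fun q => hfacP w q)
    rw [hfun]
    exact hPdiff.comp ((differentiable_id.const_mul _).cexp)
  · -- differentiability M
    have hfun : (fun w => ∏' q : (QuotientAddGroup.mk '' Cmp a b :
          Set (V ⧸ AddSubgroup.zmultiples γ)),
        gammaFacM γ x w (Quotient.out (q : V ⧸ AddSubgroup.zmultiples γ)))
        = (fun z => ∏' q : (QuotientAddGroup.mk '' Cmp a b :
            Set (V ⧸ AddSubgroup.zmultiples γ)), (1 - KM q * z)) ∘
          (fun w => Complex.exp (-(2 * (Real.pi : ℂ) * Complex.I) / pairZ γ x * w)) := by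
      funext w
      exact tprod_congr (fun q => hfacM w q)
    rw [hfun]
    exact hMdiff.comp ((differentiable_id.const_mul _).cexp)
  · -- zeros P
    intro w
    rw [tprod_congr (fun q => hfacP w q), hPzero]
    constructor
    · rintro ⟨q, hq⟩
      obtain ⟨δ, hδ, k, hk⟩ := hrepP q
      have hcomb : Complex.exp (-(2 * (Real.pi : ℂ) * Complex.I) *
          (pairZ (Quotient.out (q : V ⧸ AddSubgroup.zmultiples γ)) x - w) / pairZ γ x) = 1 := by
        rw [← hq]
        simp only [hKPdef]
        rw [← Complex.exp_add]
        congr 1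
        field_simp
        ring
      obtain ⟨N, hN⟩ := Complex.exp_eq_one_iff.mp hcomb
      have hw : w = pairZ (Quotient.out (q : V ⧸ AddSubgroup.zmultiples γ)) x
          + (N : ℂ) * pairZ γ x := by
        rw [div_eq_iff hGz] at hN
        have h2 : (2 * (Real.pi : ℂ) * Complex.I) *
            (-(pairZ (Quotient.out (q : V ⧸ AddSubgroup.zmultiples γ)) x - w))
            = (2 * (Real.pi : ℂ) * Complex.I) * ((N : ℂ) * pairZ γ x) := by
          linear_combination hN
        have h3 := mul_left_cancel₀ Complex.two_pi_I_ne_zero h2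
        linear_combination h3
      rw [hk, pairZ_add_smul] at hw
      refine ⟨δ, hδ, N + k, ?_⟩
      rw [hw]
      push_cast
      ring
    · rintro ⟨δ, hδ, n, hw⟩
      refine ⟨⟨QuotientAddGroup.mk δ, Set.mem_image_of_mem _ hδ⟩, ?_⟩
      obtain ⟨k, hk⟩ := rep_exists (QuotientAddGroup.mk δ) δ rfl
      simp only [hKPdef]
      rw [← Complex.exp_add]
      apply Complex.exp_eq_one_iff.mpr
      refine ⟨n - k, ?_⟩
      rw [hk, pairZ_add_smul, hw]
      field_simp
      push_cast
      ring
  · -- zeros M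
    intro w
    rw [tprod_congr (fun q => hfacM w q), hMzero]
    constructor
    · rintro ⟨q, hq⟩
      obtain ⟨δ, hδ, k, hk⟩ := hrepM q
      have hcomb : Complex.exp ((2 * (Real.pi : ℂ) * Complex.I) *
          (pairZ (Quotient.out (q : V ⧸ AddSubgroup.zmultiples γ)) x - w) / pairZ γ x) = 1 := by
        rw [← hq]
        simp only [hKMdef]
        rw [← Complex.exp_add]
        congr 1
        field_simp
        ring
      obtain ⟨N, hN⟩ := Complex.exp_eq_one_iff.mp hcomb
      have hw : w = pairZ (Quotient.out (q : V ⧸ AddSubgroup.zmultiples γ)) x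
          + (-N : ℂ) * pairZ γ x := by
        rw [div_eq_iff hGz] at hN
        have h2 : (2 * (Real.pi : ℂ) * Complex.I) *
            (pairZ (Quotient.out (q : V ⧸ AddSubgroup.zmultiples γ)) x - w)
            = (2 * (Real.pi : ℂ) * Complex.I) * ((N : ℂ) * pairZ γ x) := by
          linear_combination hN
        have h3 := mul_left_cancel₀ Complex.two_pi_I_ne_zero h2
        linear_combination -h3
      rw [hk, pairZ_add_smul] at hw
      refine ⟨δ, hδ, -N + k, ?_⟩
      rw [hw]
      push_cast
      ring
    · rintro ⟨δ, hδ, n, hw⟩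
      refine ⟨⟨QuotientAddGroup.mk δ, Set.mem_image_of_mem _ hδ⟩, ?_⟩
      obtain ⟨k, hk⟩ := rep_exists (QuotientAddGroup.mk δ) δ rfl
      simp only [hKMdef]
      rw [← Complex.exp_add]
      apply Complex.exp_eq_one_iff.mpr
      refine ⟨k - n, ?_⟩
      rw [hk, pairZ_add_smul, hw]
      field_simp
      push_cast
      ring

end EGG
end
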